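/- arXiv:2001.04321 — 3 statements merged into one kernel-verified Lean document; each statement's English description precedes it below -/
import Mathlib

section
/- Let M ∈ ℝ^{m×n}, H ∈ ℝ^{r×n}, and W ∈ ℝ^{m×r}, and fix a column index j with ‖H_{j,:}‖ > 0. Then the vector w* = max(0, (M H_{j,:}ᵀ − ∑_{l≠j} W_{:,l} H_{l,:} H_{j,:}ᵀ) / ‖H_{j,:}‖²) (entrywise maximum with 0) is the unique minimizer over w ≥ 0 (entrywise) of the function w ↦ ‖M − w H_{j,:} − ∑_{l≠j} W_{:,l} H_{l,:}‖_F². -/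
/-- Strict minimality for a one-dimensional nonnegative quadratic. -/
lemma hals_quad_aux (s y x : ℝ) (hs : 0 < s) (hx : 0 ≤ x)
    (hne : x ≠ max 0 y) :
    s * (max 0 y)^2 - 2*(s*y)*(max 0 y) < s * x^2 - 2*(s*y)*x := by
  rcases le_or_gt y 0 with hy | hy
  · rw [max_eq_left hy] at hne ⊢
    have hx' : 0 < x := lt_of_le_of_ne hx (Ne.symm hne)
    nlinarith [mul_pos (mul_pos hs hx') hx', mul_nonneg hx (mul_nonneg hs.le (neg_nonneg.2 hy))]
  · rw [max_eq_right hy.le] at hne ⊢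
    have h3 : 0 < s * (x - y)^2 :=
      mul_pos hs (pow_two_pos_of_ne_zero (sub_ne_zero.mpr hne))
    nlinarith [h3]

/-- The HALS column update is the unique minimizer of the restricted
nonnegative least squares problem in that column. -/
theorem hals_column_update_unique_minimizer {m n r : ℕ}
    (M : Matrix (Fin m) (Fin n) ℝ) (H : Matrix (Fin r) (Fin n) ℝ)
    (W : Matrix (Fin m) (Fin r) ℝ) (j : Fin r)
    (hH : 0 < ∑ t, (H j t)^2)
    (f : (Fin m → ℝ) → ℝ)
    (hf : ∀ w, f w = ∑ i, ∑ t,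
      (M i t - w i * H j t - ∑ l ∈ Finset.univ.erase j, W i l * H l t)^2)
    (wstar : Fin m → ℝ)
    (hwstar : ∀ i, wstar i = max 0
      ((∑ t, (M i t - ∑ l ∈ Finset.univ.erase j, W i l * H l t) * H j t)
        / (∑ t, (H j t)^2))) :
    (∀ i, 0 ≤ wstar i) ∧
      ∀ w : Fin m → ℝ, (∀ i, 0 ≤ w i) → w ≠ wstar → f wstar < f w := by
  set s : ℝ := ∑ t, (H j t)^2 with hs_def
  set B : Fin m → Fin n → ℝ :=
    fun i t => ∑ l ∈ Finset.univ.erase j, W i l * H l t with hB_def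
  set c : Fin m → ℝ := fun i => ∑ t, (M i t - B i t) * H j t with hc_def
  set A : Fin m → ℝ := fun i => ∑ t, (M i t - B i t)^2 with hA_def
  have expand : ∀ (v : Fin m → ℝ),
      f v = ∑ i, (A i - 2*(v i)*(c i) + s*(v i)^2) := by
    intro v
    rw [hf]
    refine Finset.sum_congr rfl fun i _ => ?_
    have step : ∀ t ∈ (Finset.univ : Finset (Fin n)),
        (M i t - v i * H j t - B i t)^2
          = (M i t - B i t)^2 - 2*(v i)*((M i t - B i t)*H j t)
              + (v i)^2*(H j t)^2 := fun t _ => by ring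
    rw [Finset.sum_congr rfl step, Finset.sum_add_distrib, Finset.sum_sub_distrib,
      ← Finset.mul_sum, ← Finset.mul_sum]
    ring
  -- key scalar comparison
  have key : ∀ i (x : ℝ), 0 ≤ x → x ≠ wstar i →
      A i - 2*(wstar i)*(c i) + s*(wstar i)^2 < A i - 2*x*(c i) + s*x^2 := by
    intro i x hx hne
    have hws : wstar i = max 0 (c i / s) := hwstar i
    rw [hws] at hne ⊢
    have h := hals_quad_aux s (c i / s) x hH hx hne
    rw [mul_div_cancel₀ (c i) hH.ne'] at h
    linarith
  have hws_nonneg : ∀ i, 0 ≤ wstar i := fun i => by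
    rw [hwstar i]; exact le_max_left _ _
  refine ⟨hws_nonneg, fun w hw hne => ?_⟩
  rw [expand, expand]
  obtain ⟨i0, hi0⟩ := Function.ne_iff.mp hne
  refine Finset.sum_lt_sum (fun i _ => ?_) ⟨i0, Finset.mem_univ _, key i0 (w i0) (hw i0) hi0⟩
  rcases eq_or_ne (w i) (wstar i) with h | h
  · rw [h]
  · exact (key i (w i) (hw i) h).le
end

section
/- Let M ∈ ℝ^{m×n} and H ∈ ℝ^{r×n} with ‖H_{j,:}‖ > 0 for all j, and define the HALS update of column j of W ≥ 0 by W_{:,j} ← max(0, (M H_{j,:}ᵀ − ∑_{l≠j} W_{:,l} H_{l,:} H_{j,:}ᵀ)/‖H_{j,:}‖²). Then each such column update does not increase the objective ‖M − W H‖_F²; that is, if W' agrees with W except in column j which is given by the update formula, then ‖M − W' H‖_F² ≤ ‖M − W H‖_F². -/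
lemma hals_quad (a q x : ℝ) (ha : 0 < a) (hx : 0 ≤ x) :
    a*(max 0 q)^2 - 2*(a*q)*(max 0 q) ≤ a*x^2 - 2*(a*q)*x := by
  rcases le_or_gt q 0 with hq | hq
  · rw [max_eq_left (by linarith)]
    nlinarith [mul_nonneg (le_of_lt ha) (sq_nonneg x), mul_nonneg (mul_nonneg (le_of_lt ha) (neg_nonneg.2 hq)) hx]
  · rw [max_eq_right (le_of_lt hq)]
    nlinarith [mul_nonneg (le_of_lt ha) (sq_nonneg (x - q))]

lemma hals_expand {n : ℕ} (R h : Fin n → ℝ) (x : ℝ) :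
    ∑ t, (R t - x*h t)^2 =
      ∑ t, (R t)^2 - 2*x*(∑ t, R t * h t) + x^2 * ∑ t, (h t)^2 := by
  rw [Finset.mul_sum, Finset.mul_sum, ← Finset.sum_sub_distrib, ← Finset.sum_add_distrib]
  exact Finset.sum_congr rfl fun t _ => by ring

/-- A HALS column update does not increase the objective `‖M − W H‖_F²`. -/
theorem hals_column_update_decreases {m n r : ℕ}
    (M : Matrix (Fin m) (Fin n) ℝ) (H : Matrix (Fin r) (Fin n) ℝ)
    (W W' : Matrix (Fin m) (Fin r) ℝ) (j : Fin r)
    (hH : ∀ p : Fin r, 0 < ∑ t, (H p t)^2)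
    (hWnn : ∀ i l, 0 ≤ W i l)
    (hsame : ∀ i l, l ≠ j → W' i l = W i l)
    (hupd : ∀ i, W' i j = max 0
      ((∑ t, (M i t - ∑ l ∈ Finset.univ.erase j, W i l * H l t) * H j t)
        / (∑ t, (H j t)^2))) :
    (∑ i, ∑ t, (M i t - (W' * H) i t)^2) ≤ ∑ i, ∑ t, (M i t - (W * H) i t)^2 := by
  have ha : 0 < ∑ t, (H j t)^2 := hH j
  apply Finset.sum_le_sum
  intro i _
  set R : Fin n → ℝ := fun t => M i t - ∑ l ∈ Finset.univ.erase j, W i l * H l t with hRdef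
  have hW : ∀ t, M i t - (W * H) i t = R t - W i j * H j t := by
    intro t
    simp only [Matrix.mul_apply, hRdef]
    rw [← Finset.add_sum_erase _ _ (Finset.mem_univ j)]
    ring
  have hW' : ∀ t, M i t - (W' * H) i t = R t - W' i j * H j t := by
    intro t
    simp only [Matrix.mul_apply, hRdef]
    rw [← Finset.add_sum_erase _ (fun l => W' i l * H l t) (Finset.mem_univ j),
        Finset.sum_congr rfl (fun l hl => by
          rw [hsame i l (Finset.ne_of_mem_erase hl)])]
    ring
  simp only [hW, hW']
  set b : ℝ := ∑ t, R t * H j t with hbdef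
  have e1 := hals_expand R (fun t => H j t) (W' i j)
  have e2 := hals_expand R (fun t => H j t) (W i j)
  have hx' : W' i j = max 0 (b/(∑ t, (H j t)^2)) := hupd i
  have hq := hals_quad (∑ t, (H j t)^2) (b/(∑ t, (H j t)^2)) (W i j) ha (hWnn i j)
  rw [mul_div_cancel₀ b (ne_of_gt ha)] at hq
  rw [← hx'] at hq
  linarith
end

section
/- Let T ∈ ℝ^{I₁×…×I_N} be an entrywise nonnegative tensor and r ≥ 1. The infimum of ‖T − ∑_{p=1}^r a_p^{(1)} ⊗ ⋯ ⊗ a_p^{(N)}‖_F² over entrywise nonnegative vectors a_p^{(i)} ∈ ℝ_+^{I_i} is attained; i.e., the nonnegative tensor factorization problem always admits an optimal solution. -/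
/-- The nonnegative tensor factorization problem always admits an optimal
solution: the infimum of `‖T − ∑_p ⊗_i a_p^{(i)}‖_F²` over entrywise
nonnegative factors is attained. -/
theorem ntf_optimum_attained {N r : ℕ} (I : Fin N → ℕ)
    (T : (∀ i : Fin N, Fin (I i)) → ℝ) (hT : ∀ j, 0 ≤ T j) (hr : 1 ≤ r)
    (f : (Fin r → ∀ i : Fin N, Fin (I i) → ℝ) → ℝ)
    (hf : ∀ a, f a = ∑ j : (∀ i : Fin N, Fin (I i)),
      (T j - ∑ p : Fin r, ∏ i : Fin N, a p i (j i))^2) :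
    ∃ a : Fin r → ∀ i : Fin N, Fin (I i) → ℝ,
      (∀ p i x, 0 ≤ a p i x) ∧
      ∀ a' : Fin r → ∀ i : Fin N, Fin (I i) → ℝ,
        (∀ p i x, 0 ≤ a' p i x) → f a ≤ f a' := by
  classical
  -- Trivial case: the index set of entries is empty, f ≡ 0.
  by_cases hJ : Nonempty (∀ i : Fin N, Fin (I i))
  swap
  · have hempty : IsEmpty (∀ i : Fin N, Fin (I i)) := not_nonempty_iff.mp hJ
    refine ⟨fun _ _ _ => 0, fun p i x => le_rfl, fun a' _ => ?_⟩
    rw [hf, hf]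
    haveI := hempty
    simp
  -- Trivial case: N = 0, the space of factors is a subsingleton.
  by_cases hN : N = 0
  · subst hN
    refine ⟨fun _ _ _ => 0, fun p i x => le_rfl, fun a' _ => ?_⟩
    have h : (fun _ _ _ => (0:ℝ)) = a' := by
      funext p i
      exact i.elim0
    rw [h]
  -- Main case.
  obtain ⟨j0⟩ := hJ
  have hNpos : 0 < N := Nat.pos_of_ne_zero hN
  haveI hne : ∀ i : Fin N, Nonempty (Fin (I i)) := fun i => ⟨j0 i⟩
  have hcont : Continuous f := by
    have h : f = fun a => ∑ j : (∀ i : Fin N, Fin (I i)),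
        (T j - ∑ p : Fin r, ∏ i : Fin N, a p i (j i))^2 := funext hf
    rw [h]; fun_prop
  set F : ℝ := ∑ j : (∀ i : Fin N, Fin (I i)), (T j)^2 with hF
  set C : ℝ := (Finset.univ.sup' Finset.univ_nonempty T) + Real.sqrt F with hC
  set B : ℝ := max 1 C with hB
  have hB1 : (1:ℝ) ≤ B := le_max_left _ _
  have hB0 : (0:ℝ) ≤ B := zero_le_one.trans hB1
  set K : Set (Fin r → ∀ i : Fin N, Fin (I i) → ℝ) :=
    {a | ∀ p i x, a p i x ∈ Set.Icc (0:ℝ) B} with hKdef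
  have hKcompact : IsCompact K := by
    have h : K = Set.pi Set.univ (fun p : Fin r => Set.pi Set.univ
        (fun i : Fin N => Set.pi Set.univ (fun x : Fin (I i) => Set.Icc (0:ℝ) B))) := by
      ext a
      simp only [hKdef, Set.mem_setOf_eq, Set.mem_pi, Set.mem_univ, forall_const,
        Set.mem_Icc]
    rw [h]
    exact isCompact_univ_pi fun p => isCompact_univ_pi fun i =>
      isCompact_univ_pi fun x => isCompact_Icc
  have h0K : (fun _ _ _ => (0:ℝ)) ∈ K := fun p i x => ⟨le_rfl, hB0⟩
  obtain ⟨a, haK, hmin⟩ := hKcompact.exists_isMinOn ⟨_, h0K⟩ hcont.continuousOn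
  refine ⟨a, fun p i x => (haK p i x).1, fun a' ha' => ?_⟩
  -- value at 0
  have hf0 : f (fun _ _ _ => (0:ℝ)) = F := by
    rw [hf]
    congr 1
    funext j
    simp [zero_pow hN]
  by_cases hcase : f (fun _ _ _ => (0:ℝ)) ≤ f a'
  · exact (isMinOn_iff.mp hmin _ h0K).trans hcase
  have hfa'F : f a' ≤ F := hf0 ▸ (le_of_not_ge hcase)
  -- max entries of each factor
  set m : Fin r → Fin N → ℝ := fun p i => Finset.univ.sup' Finset.univ_nonempty (a' p i) with hm
  have hle_m : ∀ p i x, a' p i x ≤ m p i := fun p i x => Finset.le_sup' _ (Finset.mem_univ x)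
  have hm_nonneg : ∀ p i, 0 ≤ m p i := fun p i =>
    (ha' p i (Classical.arbitrary _)).trans (hle_m p i _)
  set M : Fin r → ℝ := fun p => ∏ i, m p i with hM
  have hM_nonneg : ∀ p, 0 ≤ M p := fun p => Finset.prod_nonneg fun i _ => hm_nonneg p i
  -- the sum of rank-one terms is bounded by C at every entry
  have hS : ∀ j : (∀ i : Fin N, Fin (I i)), ∑ p : Fin r, ∏ i : Fin N, a' p i (j i) ≤ C := by
    intro j
    set S : ℝ := ∑ p : Fin r, ∏ i : Fin N, a' p i (j i) with hSdef
    have h1 : (T j - S)^2 ≤ f a' := by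
      rw [hf, hSdef]
      exact Finset.single_le_sum
        (f := fun j' => (T j' - ∑ p : Fin r, ∏ i : Fin N, a' p i (j' i))^2)
        (fun j' _ => sq_nonneg _) (Finset.mem_univ j)
    have h2 : |T j - S| ≤ Real.sqrt F := by
      have := Real.sqrt_le_sqrt (h1.trans hfa'F)
      rwa [Real.sqrt_sq_eq_abs] at this
    have h3 : S - T j ≤ |T j - S| := by
      rw [abs_sub_comm]; exact le_abs_self _
    have h4 : T j ≤ Finset.univ.sup' Finset.univ_nonempty T :=
      Finset.le_sup' _ (Finset.mem_univ j)
    rw [hC]; linarith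
  -- each rank-one product of maxima is bounded by C
  have hMC : ∀ p, M p ≤ C := by
    intro p
    choose x hx hmx using fun i : Fin N =>
      Finset.exists_mem_eq_sup' (Finset.univ_nonempty (α := Fin (I i))) (a' p i)
    have h1 : M p = ∏ i, a' p i (x i) := Finset.prod_congr rfl fun i _ => hmx i
    have h2 : ∏ i, a' p i (x i) ≤ ∑ p' : Fin r, ∏ i : Fin N, a' p' i (x i) :=
      Finset.single_le_sum (f := fun p' => ∏ i : Fin N, a' p' i (x i))
        (fun p' _ => Finset.prod_nonneg fun i _ => ha' p' i _) (Finset.mem_univ p)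
    exact h1 ▸ h2.trans (hS x)
  -- the rescaled factors
  set b : Fin r → ∀ i : Fin N, Fin (I i) → ℝ := fun p =>
    if h : ∀ i, m p i ≠ 0 then
      (fun i x => a' p i x * ((M p) ^ ((N:ℝ)⁻¹) / m p i))
    else fun i x => 0 with hb
  -- the rescaling preserves the rank-one terms
  have hb_prod : ∀ (p : Fin r) (j : ∀ i : Fin N, Fin (I i)), ∏ i : Fin N, b p i (j i) = ∏ i : Fin N, a' p i (j i) := by
    intro p j
    by_cases h : ∀ i, m p i ≠ 0
    · have hbp : b p = fun i x => a' p i x * ((M p) ^ ((N:ℝ)⁻¹) / m p i) := by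
        rw [hb]; exact dif_pos h
      have hMpos : 0 < M p := Finset.prod_pos fun i _ => (hm_nonneg p i).lt_of_ne' (h i)
      have hMrfl : ∏ x : Fin N, m p x = M p := rfl
      rw [hbp, Finset.prod_mul_distrib, Finset.prod_div_distrib, Finset.prod_const,
        Finset.card_univ, Fintype.card_fin]
      rw [← Real.rpow_natCast ((M p) ^ ((N:ℝ)⁻¹)) N, ← Real.rpow_mul (hM_nonneg p)]
      rw [inv_mul_cancel₀ (by exact_mod_cast hN : (N:ℝ) ≠ 0), Real.rpow_one]
      rw [hMrfl, div_self (ne_of_gt hMpos), mul_one]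
    · push_neg at h
      obtain ⟨i0, hi0⟩ := h
      have hbp : b p = fun i x => (0:ℝ) := by
        rw [hb]; exact dif_neg (by push_neg; exact ⟨i0, hi0⟩)
      have h1 : ∏ i : Fin N, b p i (j i) = 0 :=
        Finset.prod_eq_zero (Finset.mem_univ i0) (by rw [hbp])
      have h2 : ∏ i : Fin N, a' p i (j i) = 0 :=
        Finset.prod_eq_zero (Finset.mem_univ i0)
          (le_antisymm (hi0 ▸ hle_m p i0 (j i0)) (ha' p i0 (j i0)))
      rw [h1, h2]
  have hfb : f b = f a' := by
    rw [hf, hf]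
    congr 1
    funext j
    congr 2
    exact Finset.sum_congr rfl fun p _ => hb_prod p j
  -- b lies in the box K
  have hbK : b ∈ K := by
    intro p i x
    by_cases h : ∀ i, m p i ≠ 0
    · have hbp : b p = fun i x => a' p i x * ((M p) ^ ((N:ℝ)⁻¹) / m p i) := by
        rw [hb]; exact dif_pos h
      have hmpos : 0 < m p i := (hm_nonneg p i).lt_of_ne' (h i)
      have hr0 : (0:ℝ) ≤ (M p) ^ ((N:ℝ)⁻¹) := Real.rpow_nonneg (hM_nonneg p) _
      constructor
      · rw [hbp]
        exact mul_nonneg (ha' p i x) (div_nonneg hr0 hmpos.le)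
      · have h1 : b p i x ≤ (M p) ^ ((N:ℝ)⁻¹) := by
          rw [hbp]
          calc a' p i x * ((M p) ^ ((N:ℝ)⁻¹) / m p i)
              ≤ m p i * ((M p) ^ ((N:ℝ)⁻¹) / m p i) :=
                mul_le_mul_of_nonneg_right (hle_m p i x) (div_nonneg hr0 hmpos.le)
            _ = (M p) ^ ((N:ℝ)⁻¹) := by field_simp
        refine h1.trans ?_
        by_cases hM1 : M p ≤ 1
        · exact le_trans (Real.rpow_le_one (hM_nonneg p) hM1 (by positivity)) hB1
        · push_neg at hM1
          have h2 : (M p) ^ ((N:ℝ)⁻¹) ≤ (M p) ^ ((1:ℝ)) := by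
            apply Real.rpow_le_rpow_of_exponent_le hM1.le
            rw [inv_le_one_iff₀]
            right
            exact_mod_cast hNpos
          rw [Real.rpow_one] at h2
          exact h2.trans ((hMC p).trans (le_max_right _ _))
    · have hbp : b p = fun i x => (0:ℝ) := by
        rw [hb]; exact dif_neg h
      rw [hbp]
      exact ⟨le_rfl, hB0⟩
  exact (isMinOn_iff.mp hmin b hbK).trans hfb.le
end
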